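/- Suppose p satisfies the Chapman–Kolmogorov equations with respect to a σ-finite measure m on X. Let ρ be a locally finite (Radon) atomless measure on ℝ and let μ = ρ ⊗ m be the product measure on E = ℝ × X. Then for every n ≥ 0 and all (s,x), (t,y) ∈ E: p_n^μ(s,x,t,y) = (ρ((s,t))^n / n!) · p(s,x,t,y), and consequently p^μ(s,x,t,y) = e^{ρ((s,t))} · p(s,x,t,y), where ρ((s,t)) is the ρ-measure of the open interval (s,t) (interpreted as 0 if s ≥ t). -/

import Mathlib

open MeasureTheory
open scoped ENNReal NNReal

/-- The iterated perturbation terms: `p₀^μ = p`,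
`p_n^μ(s,x,t,y) = ∫ p_{n−1}^μ(s,x,u,z)·p(u,z,t,y) dμ(u,z)`. -/
noncomputable def pITer {X : Type*} [MeasurableSpace X]
    (p : ℝ × X → ℝ × X → ℝ≥0∞) (μ : Measure (ℝ × X)) : ℕ → ℝ × X → ℝ × X → ℝ≥0∞
  | 0 => p
  | n + 1 => fun a b => ∫⁻ w, pITer p μ n a w * p w b ∂μ

private lemma measIooL (ρ : Measure ℝ) (s : ℝ) : Measurable fun u => ρ (Set.Ioo s u) :=
  Monotone.measurable (fun _ _ huv => measure_mono (Set.Ioo_subset_Ioo le_rfl huv))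

private lemma measIooR (ρ : Measure ℝ) (t : ℝ) : Measurable fun u => ρ (Set.Ioo u t) :=
  Antitone.measurable (fun _ _ huv => measure_mono (Set.Ioo_subset_Ioo huv le_rfl))

private lemma finIoo (ρ : Measure ℝ) [IsLocallyFiniteMeasure ρ] (a b : ℝ) :
    ρ (Set.Ioo a b) ≠ ∞ :=
  ((measure_mono Set.Ioo_subset_Icc_self).trans_lt (isCompact_Icc.measure_lt_top)).ne

private lemma natp1_ne_zero (k : ℕ) : ((k : ℝ≥0∞) + 1) ≠ 0 := by simp

private lemma natp1_ne_top (k : ℕ) : ((k : ℝ≥0∞) + 1) ≠ ∞ := by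
  simp [ENNReal.add_ne_top]

/-- The key recurrence between mixed moment integrals. -/
private lemma Brec (ρ : Measure ℝ) [IsLocallyFiniteMeasure ρ] (k j : ℕ)
    (hL : ∀ a b : ℝ, ∫⁻ v in Set.Ioo a b, ρ (Set.Ioo a v) ^ k ∂ρ
        = ρ (Set.Ioo a b) ^ (k + 1) / ((k : ℝ≥0∞) + 1))
    (hR : ∀ a b : ℝ, ∫⁻ u in Set.Ioo a b, ρ (Set.Ioo u b) ^ j ∂ρ
        = ρ (Set.Ioo a b) ^ (j + 1) / ((j : ℝ≥0∞) + 1))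
    (s t : ℝ) :
    ((j : ℝ≥0∞) + 1) * ∫⁻ u in Set.Ioo s t, ρ (Set.Ioo s u) ^ (k + 1) * ρ (Set.Ioo u t) ^ j ∂ρ
      = ((k : ℝ≥0∞) + 1)
          * ∫⁻ u in Set.Ioo s t, ρ (Set.Ioo s u) ^ k * ρ (Set.Ioo u t) ^ (j + 1) ∂ρ := by
  set g : ℝ × ℝ → ℝ≥0∞ := fun q => ρ (Set.Ioo s q.2) ^ k * ρ (Set.Ioo q.1 t) ^ j with hg
  have hgmeas : Measurable g :=
    (((measIooL ρ s).comp measurable_snd).pow_const k).mul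
      (((measIooR ρ t).comp measurable_fst).pow_const j)
  set S : Set (ℝ × ℝ) := {q : ℝ × ℝ | q.2 < q.1} with hS
  have hSmeas : MeasurableSet S := measurableSet_lt measurable_snd measurable_fst
  set f : ℝ → ℝ → ℝ≥0∞ := fun u v => S.indicator g (u, v) with hf
  have hfmeas : Measurable (Function.uncurry f) := by
    have : Function.uncurry f = S.indicator g := by
      funext q; simp [Function.uncurry, hf]
    rw [this]; exact hgmeas.indicator hSmeas
  -- Step 1 : the LHS integral equals (k+1) times the iterated integral
  have step1 :
      ∫⁻ u in Set.Ioo s t, ρ (Set.Ioo s u) ^ (k + 1) * ρ (Set.Ioo u t) ^ j ∂ρ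
        = ((k : ℝ≥0∞) + 1) * ∫⁻ u in Set.Ioo s t, ∫⁻ v in Set.Ioo s t, f u v ∂ρ ∂ρ := by
    rw [← lintegral_const_mul' _ _ (natp1_ne_top k)]
    refine setLIntegral_congr_fun measurableSet_Ioo (fun u hu => ?_)
    have hIoo : ρ (Set.Ioo s u) ^ (k + 1)
        = ((k : ℝ≥0∞) + 1) * ∫⁻ v in Set.Ioo s u, ρ (Set.Ioo s v) ^ k ∂ρ := by
      rw [hL s u, ENNReal.mul_div_cancel (natp1_ne_zero k) (natp1_ne_top k)]
    have hinner : ∫⁻ v in Set.Ioo s t, f u v ∂ρ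
        = ∫⁻ v in Set.Ioo s u, ρ (Set.Ioo s v) ^ k * ρ (Set.Ioo u t) ^ j ∂ρ := by
      have h1 : ∀ v : ℝ, f u v = (Set.Iio u).indicator
          (fun v => ρ (Set.Ioo s v) ^ k * ρ (Set.Ioo u t) ^ j) v := by
        intro v
        by_cases h : v < u
        · rw [show f u v = g (u, v) from Set.indicator_of_mem (show (u, v) ∈ S from h) g,
            Set.indicator_of_mem (show v ∈ Set.Iio u from h)]
        · rw [show f u v = 0 from Set.indicator_of_notMem (show (u, v) ∉ S from h) g,
            Set.indicator_of_notMem (show v ∉ Set.Iio u from h)]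
      have hset : Set.Iio u ∩ Set.Ioo s t = Set.Ioo s u := by
        ext v
        simp only [Set.mem_inter_iff, Set.mem_Iio, Set.mem_Ioo]
        constructor
        · rintro ⟨h1', h2', _⟩; exact ⟨h2', h1'⟩
        · rintro ⟨h1', h2'⟩; exact ⟨h2', h1', h2'.trans hu.2⟩
      rw [lintegral_congr h1, lintegral_indicator measurableSet_Iio,
        Measure.restrict_restrict measurableSet_Iio, hset]
    rw [hinner, hIoo, mul_assoc]
    congr 1
    rw [← lintegral_mul_const' _ _ (ENNReal.pow_ne_top (finIoo ρ u t))]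
  -- Step 2 : swap the order of integration
  have step2 :
      ∫⁻ u in Set.Ioo s t, ∫⁻ v in Set.Ioo s t, f u v ∂ρ ∂ρ
        = ∫⁻ v in Set.Ioo s t, ∫⁻ u in Set.Ioo s t, f u v ∂ρ ∂ρ :=
    lintegral_lintegral_swap hfmeas.aemeasurable
  -- Step 3 : compute the inner integral after swapping
  have step3 :
      ∫⁻ v in Set.Ioo s t, ∫⁻ u in Set.Ioo s t, f u v ∂ρ ∂ρ
        = ∫⁻ v in Set.Ioo s t,
            ρ (Set.Ioo s v) ^ k * (ρ (Set.Ioo v t) ^ (j + 1) / ((j : ℝ≥0∞) + 1)) ∂ρ := by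
    refine setLIntegral_congr_fun measurableSet_Ioo (fun v hv => ?_)
    have h1 : ∀ u : ℝ, f u v = (Set.Ioi v).indicator
        (fun u => ρ (Set.Ioo s v) ^ k * ρ (Set.Ioo u t) ^ j) u := by
      intro u
      by_cases h : v < u
      · rw [show f u v = g (u, v) from Set.indicator_of_mem (show (u, v) ∈ S from h) g,
          Set.indicator_of_mem (show u ∈ Set.Ioi v from h)]
      · rw [show f u v = 0 from Set.indicator_of_notMem (show (u, v) ∉ S from h) g,
          Set.indicator_of_notMem (show u ∉ Set.Ioi v from h)]
    rw [lintegral_congr h1, lintegral_indicator measurableSet_Ioi,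
      Measure.restrict_restrict measurableSet_Ioi]
    have hset : Set.Ioi v ∩ Set.Ioo s t = Set.Ioo v t := by
      ext u
      simp only [Set.mem_inter_iff, Set.mem_Ioi, Set.mem_Ioo]
      constructor
      · rintro ⟨h1', _, h3'⟩; exact ⟨h1', h3'⟩
      · rintro ⟨h1', h2'⟩; exact ⟨h1', hv.1.trans h1', h2'⟩
    rw [hset, lintegral_const_mul' _ _ (ENNReal.pow_ne_top (finIoo ρ s v)), hR v t]
  rw [step1, step2, step3]
  calc ((j : ℝ≥0∞) + 1) * (((k : ℝ≥0∞) + 1) * ∫⁻ v in Set.Ioo s t,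
        ρ (Set.Ioo s v) ^ k * (ρ (Set.Ioo v t) ^ (j + 1) / ((j : ℝ≥0∞) + 1)) ∂ρ)
      = ((j : ℝ≥0∞) + 1) * (((k : ℝ≥0∞) + 1) * (((j : ℝ≥0∞) + 1)⁻¹ *
          ∫⁻ v in Set.Ioo s t, ρ (Set.Ioo s v) ^ k * ρ (Set.Ioo v t) ^ (j + 1) ∂ρ)) := by
        congr 1
        congr 1
        rw [← lintegral_const_mul' _ _ (ENNReal.inv_ne_top.mpr (natp1_ne_zero j))]
        refine lintegral_congr fun v => ?_
        rw [div_eq_mul_inv]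
        ring
    _ = ((k : ℝ≥0∞) + 1)
          * ∫⁻ u in Set.Ioo s t, ρ (Set.Ioo s u) ^ k * ρ (Set.Ioo u t) ^ (j + 1) ∂ρ := by
        rw [← mul_assoc, ← mul_assoc, mul_comm ((j : ℝ≥0∞) + 1) (((k : ℝ≥0∞) + 1)),
          mul_assoc (((k : ℝ≥0∞) + 1)), ENNReal.mul_inv_cancel (natp1_ne_zero j)
            (natp1_ne_top j), mul_one]

/-- The pure moment identity. -/
private lemma pureInt (ρ : Measure ℝ) [IsLocallyFiniteMeasure ρ] (hA : ∀ u : ℝ, ρ {u} = 0) :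
    ∀ (n : ℕ) (a b : ℝ),
      (∫⁻ u in Set.Ioo a b, ρ (Set.Ioo a u) ^ n ∂ρ
          = ρ (Set.Ioo a b) ^ (n + 1) / ((n : ℝ≥0∞) + 1)) ∧
      (∫⁻ u in Set.Ioo a b, ρ (Set.Ioo u b) ^ n ∂ρ
          = ρ (Set.Ioo a b) ^ (n + 1) / ((n : ℝ≥0∞) + 1)) := by
  intro n
  induction n using Nat.strong_induction_on with
  | _ n IH =>
  intro s t
  have hL : ∀ k < n, ∀ a b : ℝ, ∫⁻ v in Set.Ioo a b, ρ (Set.Ioo a v) ^ k ∂ρ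
      = ρ (Set.Ioo a b) ^ (k + 1) / ((k : ℝ≥0∞) + 1) := fun k hk a b => (IH k hk a b).1
  have hR : ∀ j < n, ∀ a b : ℝ, ∫⁻ u in Set.Ioo a b, ρ (Set.Ioo u b) ^ j ∂ρ
      = ρ (Set.Ioo a b) ^ (j + 1) / ((j : ℝ≥0∞) + 1) := fun j hj a b => (IH j hj a b).2
  -- the chain identity
  have chain : ∀ k ≤ n, (n.choose k : ℝ≥0∞)
      * ∫⁻ u in Set.Ioo s t, ρ (Set.Ioo s u) ^ k * ρ (Set.Ioo u t) ^ (n - k) ∂ρ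
      = ∫⁻ u in Set.Ioo s t, ρ (Set.Ioo u t) ^ n ∂ρ := by
    intro k
    induction k with
    | zero =>
      intro _
      simp
    | succ k IHk =>
      intro hk
      have hkn : k < n := hk
      have hjn : n - (k + 1) < n := by omega
      have hrec := Brec ρ k (n - (k + 1)) (hL k hkn) (hR (n - (k + 1)) hjn) s t
      have hj1 : n - (k + 1) + 1 = n - k := by omega
      rw [hj1] at hrec
      have hmk0 : ((n - k : ℕ) : ℝ≥0∞) ≠ 0 := by
        simp only [ne_eq, Nat.cast_eq_zero]; omega
      have hmktop : ((n - k : ℕ) : ℝ≥0∞) ≠ ∞ := ENNReal.natCast_ne_top _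
      have hcast : ((n - (k + 1) : ℕ) : ℝ≥0∞) + 1 = ((n - k : ℕ) : ℝ≥0∞) := by
        have : (n - (k + 1)) + 1 = n - k := by omega
        rw [← this]; push_cast; ring
      rw [hcast] at hrec
      -- hrec : (n-k) * B(k+1, n-(k+1)) = (k+1) * B(k, n-k)
      have hchoose : ((n.choose (k + 1) : ℕ) : ℝ≥0∞) * (((k : ℝ≥0∞)) + 1)
          = ((n.choose k : ℕ) : ℝ≥0∞) * ((n - k : ℕ) : ℝ≥0∞) := by
        have := Nat.choose_succ_right_eq n k
        have h2 : ((n.choose (k + 1) * (k + 1) : ℕ) : ℝ≥0∞)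
            = ((n.choose k * (n - k) : ℕ) : ℝ≥0∞) := by rw [this]
        push_cast at h2 ⊢
        convert h2 using 2
      have key : ((n - k : ℕ) : ℝ≥0∞) * ((n.choose (k + 1) : ℝ≥0∞)
          * ∫⁻ u in Set.Ioo s t,
              ρ (Set.Ioo s u) ^ (k + 1) * ρ (Set.Ioo u t) ^ (n - (k + 1)) ∂ρ)
          = ((n - k : ℕ) : ℝ≥0∞) * ∫⁻ u in Set.Ioo s t, ρ (Set.Ioo u t) ^ n ∂ρ := by
        calc ((n - k : ℕ) : ℝ≥0∞) * ((n.choose (k + 1) : ℝ≥0∞)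
              * ∫⁻ u in Set.Ioo s t,
                  ρ (Set.Ioo s u) ^ (k + 1) * ρ (Set.Ioo u t) ^ (n - (k + 1)) ∂ρ)
            = (n.choose (k + 1) : ℝ≥0∞) * (((n - k : ℕ) : ℝ≥0∞)
              * ∫⁻ u in Set.Ioo s t,
                  ρ (Set.Ioo s u) ^ (k + 1) * ρ (Set.Ioo u t) ^ (n - (k + 1)) ∂ρ) := by ring
          _ = (n.choose (k + 1) : ℝ≥0∞) * (((k : ℝ≥0∞) + 1)
              * ∫⁻ u in Set.Ioo s t,
                  ρ (Set.Ioo s u) ^ k * ρ (Set.Ioo u t) ^ (n - k) ∂ρ) := by rw [hrec]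
          _ = ((n.choose (k + 1) : ℝ≥0∞) * ((k : ℝ≥0∞) + 1))
              * ∫⁻ u in Set.Ioo s t,
                  ρ (Set.Ioo s u) ^ k * ρ (Set.Ioo u t) ^ (n - k) ∂ρ := by ring
          _ = (((n.choose k : ℕ) : ℝ≥0∞) * ((n - k : ℕ) : ℝ≥0∞))
              * ∫⁻ u in Set.Ioo s t,
                  ρ (Set.Ioo s u) ^ k * ρ (Set.Ioo u t) ^ (n - k) ∂ρ := by rw [hchoose]
          _ = ((n - k : ℕ) : ℝ≥0∞) * (((n.choose k : ℕ) : ℝ≥0∞)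
              * ∫⁻ u in Set.Ioo s t,
                  ρ (Set.Ioo s u) ^ k * ρ (Set.Ioo u t) ^ (n - k) ∂ρ) := by ring
          _ = ((n - k : ℕ) : ℝ≥0∞)
              * ∫⁻ u in Set.Ioo s t, ρ (Set.Ioo u t) ^ n ∂ρ := by rw [IHk hkn.le]
      exact (ENNReal.mul_right_inj hmk0 hmktop).mp key
  -- the splitting identity
  have split : ∀ u ∈ Set.Ioo s t, ρ (Set.Ioo s t) = ρ (Set.Ioo s u) + ρ (Set.Ioo u t) := by
    intro u hu
    have hIoc : ρ (Set.Ioc s u) = ρ (Set.Ioo s u) := by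
      refine le_antisymm ?_ (measure_mono Set.Ioo_subset_Ioc_self)
      rw [← Set.Ioo_union_right hu.1]
      exact (measure_union_le _ _).trans (by rw [hA u, add_zero])
    rw [← Set.Ioc_union_Ioo_eq_Ioo hu.1.le hu.2,
      measure_union (Set.Ioc_disjoint_Ioi_same.mono_right Set.Ioo_subset_Ioi_self) measurableSet_Ioo, hIoc]
  -- the binomial computation
  have hfin : ρ (Set.Ioo s t) ≠ ∞ := finIoo ρ s t
  have hmeasterm : ∀ k : ℕ, Measurable fun u =>
      ρ (Set.Ioo s u) ^ k * ρ (Set.Ioo u t) ^ (n - k) * (n.choose k : ℝ≥0∞) :=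
    fun k => (((measIooL ρ s).pow_const k).mul ((measIooR ρ t).pow_const (n - k))).mul_const _
  have binom : ρ (Set.Ioo s t) ^ (n + 1)
      = ((n : ℝ≥0∞) + 1) * ∫⁻ u in Set.Ioo s t, ρ (Set.Ioo u t) ^ n ∂ρ := by
    have h0 : ρ (Set.Ioo s t) ^ (n + 1)
        = ∫⁻ _ in Set.Ioo s t, ρ (Set.Ioo s t) ^ n ∂ρ := by
      rw [setLIntegral_const, pow_succ, mul_comm (ρ (Set.Ioo s t) ^ n)]
    rw [h0]
    have h1 : ∫⁻ _u in Set.Ioo s t, ρ (Set.Ioo s t) ^ n ∂ρ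
        = ∫⁻ u in Set.Ioo s t, ∑ k ∈ Finset.range (n + 1),
            ρ (Set.Ioo s u) ^ k * ρ (Set.Ioo u t) ^ (n - k) * (n.choose k : ℝ≥0∞) ∂ρ := by
      refine setLIntegral_congr_fun measurableSet_Ioo (fun u hu => ?_)
      rw [split u hu, add_pow]
    rw [h1, lintegral_finset_sum _ fun k _ => hmeasterm k]
    have h2 : ∀ k ∈ Finset.range (n + 1),
        ∫⁻ u in Set.Ioo s t,
            ρ (Set.Ioo s u) ^ k * ρ (Set.Ioo u t) ^ (n - k) * (n.choose k : ℝ≥0∞) ∂ρ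
          = ∫⁻ u in Set.Ioo s t, ρ (Set.Ioo u t) ^ n ∂ρ := by
      intro k hk
      rw [lintegral_mul_const' _ _ (ENNReal.natCast_ne_top _), mul_comm]
      exact chain k (Nat.lt_succ_iff.mp (Finset.mem_range.mp hk))
    rw [Finset.sum_congr rfl h2, Finset.sum_const, Finset.card_range, nsmul_eq_mul]
    push_cast
    ring
  have hJ : ∫⁻ u in Set.Ioo s t, ρ (Set.Ioo u t) ^ n ∂ρ
      = ρ (Set.Ioo s t) ^ (n + 1) / ((n : ℝ≥0∞) + 1) :=
    (ENNReal.eq_div_iff (natp1_ne_zero n) (natp1_ne_top n)).mpr binom.symm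
  constructor
  · have := chain n le_rfl
    simp only [Nat.choose_self, Nat.cast_one, one_mul, Nat.sub_self, pow_zero, mul_one] at this
    rw [this, hJ]
  · exact hJ

theorem stmt_13 {X : Type*} [MeasurableSpace X]
    (p : ℝ × X → ℝ × X → ℝ≥0∞)
    (hp : Measurable fun q : (ℝ × X) × (ℝ × X) => p q.1 q.2)
    (hvan : ∀ (s t : ℝ) (x y : X), t ≤ s → p (s, x) (t, y) = 0)
    (m : Measure X) [SigmaFinite m]
    (hCK : ∀ (s u t : ℝ), s < u → u < t → ∀ (x y : X),
      p (s, x) (t, y) = ∫⁻ z, p (s, x) (u, z) * p (u, z) (t, y) ∂m)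
    (ρ : Measure ℝ) [IsLocallyFiniteMeasure ρ]
    (hatomless : ∀ u : ℝ, ρ {u} = 0) :
    ∀ (n : ℕ) (s t : ℝ) (x y : X),
      pITer p (ρ.prod m) n (s, x) (t, y)
        = ρ (Set.Ioo s t) ^ n / (Nat.factorial n : ℝ≥0∞) * p (s, x) (t, y) ∧
      ∑' n : ℕ, pITer p (ρ.prod m) n (s, x) (t, y)
        = ENNReal.ofReal (Real.exp (ρ (Set.Ioo s t)).toReal) * p (s, x) (t, y) := by
  have hp1 : ∀ a : ℝ × X, Measurable (p a) := fun a =>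
    hp.comp (measurable_const.prodMk measurable_id)
  have hp2 : ∀ b : ℝ × X, Measurable fun a => p a b := fun b =>
    hp.comp (measurable_id.prodMk measurable_const)
  have hfactne : ∀ n : ℕ, ((Nat.factorial n : ℕ) : ℝ≥0∞) ≠ 0 := fun n => by
    simp [Nat.factorial_ne_zero]
  have key : ∀ (n : ℕ) (s t : ℝ) (x y : X),
      pITer p (ρ.prod m) n (s, x) (t, y)
        = ρ (Set.Ioo s t) ^ n / (Nat.factorial n : ℝ≥0∞) * p (s, x) (t, y) := by
    intro n
    induction n with
    | zero =>
      intro s t x y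
      simp [pITer]
    | succ n ihn =>
      intro s t x y
      have hcfin : ∀ u : ℝ, ρ (Set.Ioo s u) ^ n / (Nat.factorial n : ℝ≥0∞) ≠ ∞ := fun u =>
        (ENNReal.div_lt_top (ENNReal.pow_ne_top (finIoo ρ s u)) (hfactne n)).ne
      have step0 : pITer p (ρ.prod m) (n + 1) (s, x) (t, y)
          = ∫⁻ w, (ρ (Set.Ioo s w.1) ^ n / (Nat.factorial n : ℝ≥0∞) * p (s, x) w)
              * p w (t, y) ∂(ρ.prod m) := by
        show (∫⁻ w, pITer p (ρ.prod m) n (s, x) w * p w (t, y) ∂(ρ.prod m)) = _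
        refine lintegral_congr fun w => ?_
        obtain ⟨u, z⟩ := w
        rw [ihn s u x z]
      have hmeas : Measurable fun w : ℝ × X =>
          (ρ (Set.Ioo s w.1) ^ n / (Nat.factorial n : ℝ≥0∞) * p (s, x) w) * p w (t, y) :=
        ((((measIooL ρ s).comp measurable_fst).pow_const n).div_const _ |>.mul
          (hp1 (s, x))).mul (hp2 (t, y))
      rw [step0, lintegral_prod _ hmeas.aemeasurable]
      have step1 : ∀ u : ℝ,
          (∫⁻ z, (ρ (Set.Ioo s u) ^ n / (Nat.factorial n : ℝ≥0∞) * p (s, x) (u, z))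
              * p (u, z) (t, y) ∂m)
            = (Set.Ioo s t).indicator (fun u =>
                ρ (Set.Ioo s u) ^ n / (Nat.factorial n : ℝ≥0∞) * p (s, x) (t, y)) u := by
        intro u
        by_cases hu : u ∈ Set.Ioo s t
        · rw [Set.indicator_of_mem hu]
          calc (∫⁻ z, (ρ (Set.Ioo s u) ^ n / (Nat.factorial n : ℝ≥0∞) * p (s, x) (u, z))
                  * p (u, z) (t, y) ∂m)
              = ∫⁻ z, ρ (Set.Ioo s u) ^ n / (Nat.factorial n : ℝ≥0∞)
                  * (p (s, x) (u, z) * p (u, z) (t, y)) ∂m := by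
                refine lintegral_congr fun z => ?_; ring
            _ = ρ (Set.Ioo s u) ^ n / (Nat.factorial n : ℝ≥0∞)
                  * ∫⁻ z, p (s, x) (u, z) * p (u, z) (t, y) ∂m :=
                lintegral_const_mul' _ _ (hcfin u)
            _ = ρ (Set.Ioo s u) ^ n / (Nat.factorial n : ℝ≥0∞) * p (s, x) (t, y) := by
                rw [← hCK s u t hu.1 hu.2 x y]
        · rw [Set.indicator_of_notMem hu]
          simp only [Set.mem_Ioo, not_and_or, not_lt] at hu
          rcases hu with hu | hu
          · have : ∀ z : X, (ρ (Set.Ioo s u) ^ n / (Nat.factorial n : ℝ≥0∞)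
                * p (s, x) (u, z)) * p (u, z) (t, y) = 0 := fun z => by
              rw [hvan s u x z hu, mul_zero, zero_mul]
            rw [lintegral_congr this, lintegral_zero]
          · have : ∀ z : X, (ρ (Set.Ioo s u) ^ n / (Nat.factorial n : ℝ≥0∞)
                * p (s, x) (u, z)) * p (u, z) (t, y) = 0 := fun z => by
              rw [hvan u t z y hu, mul_zero]
            rw [lintegral_congr this, lintegral_zero]
      calc ∫⁻ u, ∫⁻ z, (ρ (Set.Ioo s u) ^ n / (Nat.factorial n : ℝ≥0∞) * p (s, x) (u, z))
              * p (u, z) (t, y) ∂m ∂ρ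
          = ∫⁻ u, (Set.Ioo s t).indicator (fun u =>
              ρ (Set.Ioo s u) ^ n / (Nat.factorial n : ℝ≥0∞) * p (s, x) (t, y)) u ∂ρ :=
            lintegral_congr step1
        _ = ∫⁻ u in Set.Ioo s t,
              ρ (Set.Ioo s u) ^ n / (Nat.factorial n : ℝ≥0∞) * p (s, x) (t, y) ∂ρ :=
            lintegral_indicator measurableSet_Ioo _
        _ = ∫⁻ u in Set.Ioo s t, ρ (Set.Ioo s u) ^ n
              * (((Nat.factorial n : ℕ) : ℝ≥0∞)⁻¹ * p (s, x) (t, y)) ∂ρ := by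
            refine lintegral_congr fun u => ?_
            rw [div_eq_mul_inv]; ring
        _ = (∫⁻ u in Set.Ioo s t, ρ (Set.Ioo s u) ^ n ∂ρ)
              * (((Nat.factorial n : ℕ) : ℝ≥0∞)⁻¹ * p (s, x) (t, y)) :=
            lintegral_mul_const _ ((measIooL ρ s).pow_const n)
        _ = ρ (Set.Ioo s t) ^ (n + 1) / ((n : ℝ≥0∞) + 1)
              * (((Nat.factorial n : ℕ) : ℝ≥0∞)⁻¹ * p (s, x) (t, y)) := by
            rw [(pureInt ρ hatomless n s t).1]
        _ = ρ (Set.Ioo s t) ^ (n + 1) / (Nat.factorial (n + 1) : ℝ≥0∞) * p (s, x) (t, y) := by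
            have hfc : ((Nat.factorial (n + 1) : ℕ) : ℝ≥0∞)
                = ((n : ℝ≥0∞) + 1) * ((Nat.factorial n : ℕ) : ℝ≥0∞) := by
              rw [Nat.factorial_succ]; push_cast; ring
            rw [hfc, div_eq_mul_inv, div_eq_mul_inv,
              ENNReal.mul_inv (Or.inl (natp1_ne_zero n)) (Or.inl (natp1_ne_top n))]
            ring
  intro n s t x y
  refine ⟨key n s t x y, ?_⟩
  have hfin : ρ (Set.Ioo s t) ≠ ∞ := finIoo ρ s t
  set r : ℝ := (ρ (Set.Ioo s t)).toReal with hr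
  have hcr : ρ (Set.Ioo s t) = ENNReal.ofReal r := (ENNReal.ofReal_toReal hfin).symm
  calc ∑' k : ℕ, pITer p (ρ.prod m) k (s, x) (t, y)
      = ∑' k : ℕ, ρ (Set.Ioo s t) ^ k / (Nat.factorial k : ℝ≥0∞) * p (s, x) (t, y) :=
        tsum_congr fun k => key k s t x y
    _ = (∑' k : ℕ, ρ (Set.Ioo s t) ^ k / (Nat.factorial k : ℝ≥0∞)) * p (s, x) (t, y) :=
        ENNReal.tsum_mul_right
    _ = ENNReal.ofReal (Real.exp r) * p (s, x) (t, y) := by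
        congr 1
        calc ∑' k : ℕ, ρ (Set.Ioo s t) ^ k / (Nat.factorial k : ℝ≥0∞)
            = ∑' k : ℕ, ENNReal.ofReal (r ^ k / (Nat.factorial k : ℝ)) :=
              tsum_congr fun k => by
                rw [ENNReal.ofReal_div_of_pos (by positivity), ENNReal.ofReal_pow
                  ENNReal.toReal_nonneg, ← hr, ← hcr, ENNReal.ofReal_natCast]
          _ = ENNReal.ofReal (∑' k : ℕ, r ^ k / (Nat.factorial k : ℝ)) :=
              (ENNReal.ofReal_tsum_of_nonneg (fun k => by positivity)
                (Real.summable_pow_div_factorial r)).symm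
          _ = ENNReal.ofReal (Real.exp r) := by
              rw [Real.exp_eq_exp_ℝ, NormedSpace.exp_eq_tsum_div]
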